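/- Let R be a (not necessarily commutative) ring, n ∈ ℕ, and x, y : Fin n → R families of elements satisfying: x_i x_j = x_j x_i and y_i y_j = y_j y_i for all i,j; y_i x_j = x_j y_i for i ≠ j; and y_i x_i = x_i y_i + 1 for all i. For a multi-index α : Fin n → ℕ write x^α = Π_i x_i^{α_i} and y^α = Π_i y_i^{α_i} (well-defined since the x_i commute and the y_i commute), C(α,ε) = Π_i C(α_i,ε_i), and ε! = Π_i (ε_i)!. Then for all multi-indices α, σ, β, τ : Fin n → ℕ: x^α y^σ · x^β y^τ − x^β y^τ · x^α y^σ = Σ_ε ( C(β,ε)C(σ,ε) − C(α,ε)C(τ,ε) ) · ε! · x^{α+β−ε} y^{σ+τ−ε}, where the sum is over all ε : Fin n → ℕ (only finitely many terms are nonzero, since C(β,ε)C(σ,ε) = 0 unless ε ≤ β and ε ≤ σ componentwise, and C(α,ε)C(τ,ε) = 0 unless ε ≤ α and ε ≤ τ componentwise; in particular the exponents α+β−ε and σ+τ−ε are componentwise non-negative in every nonzero term). -/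

import Mathlib

/-- The ordered monomial `z^α = z₀^{α₀} ⋯ z_{n-1}^{α_{n-1}}` in a (not necessarily
commutative) ring; for a commuting family this is the monomial `z^α`. -/
def orderedPow {R : Type} [Ring R] {n : ℕ} (z : Fin n → R) (α : Fin n → ℕ) : R :=
  ((List.finRange n).map (fun i => z i ^ α i)).prod

namespace Statement10Aux

open Finset

variable {R : Type} [Ring R]

lemma orderedPow_zero_fun (z : Fin 0 → R) (α : Fin 0 → ℕ) : orderedPow z α = 1 := by
  simp [orderedPow]

lemma orderedPow_succ {n : ℕ} (z : Fin (n + 1) → R) (α : Fin (n + 1) → ℕ) :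
    orderedPow z α = z 0 ^ α 0 * orderedPow (z ∘ Fin.succ) (α ∘ Fin.succ) := by
  simp [orderedPow, List.finRange_succ, List.map_map, Function.comp_def]

lemma commute_orderedPow {n : ℕ} {a : R} {z : Fin n → R} (h : ∀ i, Commute a (z i))
    (α : Fin n → ℕ) : Commute a (orderedPow z α) := by
  apply Commute.list_prod_right
  intro b hb
  simp only [List.mem_map] at hb
  obtain ⟨i, -, rfl⟩ := hb
  exact (h i).pow_right _

lemma orderedPow_add {n : ℕ} (z : Fin n → R) (h : ∀ i j, Commute (z i) (z j))
    (α β : Fin n → ℕ) : orderedPow z (α + β) = orderedPow z α * orderedPow z β := by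
  induction n with
  | zero => simp [orderedPow_zero_fun]
  | succ n ih =>
    rw [orderedPow_succ z (α + β), orderedPow_succ z α, orderedPow_succ z β]
    have h1 : Commute (z 0 ^ β 0) (orderedPow (z ∘ Fin.succ) (α ∘ Fin.succ)) :=
      commute_orderedPow (fun i => (h _ _).pow_left _) _
    have h2 := ih (z ∘ Fin.succ) (fun i j => h _ _) (α ∘ Fin.succ) (β ∘ Fin.succ)
    have hc : (α + β) ∘ Fin.succ = α ∘ Fin.succ + β ∘ Fin.succ := rfl
    rw [hc, h2, Pi.add_apply, pow_add, mul_assoc, ← mul_assoc (z 0 ^ β 0), h1.eq,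
      mul_assoc, ← mul_assoc]

/-- `v * u^m = u^m * v + m • u^(m-1)` for `v u = u v + 1`. -/
lemma weyl_single (u v : R) (h : v * u = u * v + 1) (m : ℕ) :
    v * u ^ m = u ^ m * v + m • u ^ (m - 1) := by
  induction m with
  | zero => simp
  | succ m ih =>
    have key : (m • u ^ (m - 1)) * u = m • u ^ m := by
      cases m with
      | zero => simp
      | succ k =>
        rw [smul_mul_assoc, Nat.succ_sub_one, ← pow_succ]
    rw [pow_succ, ← mul_assoc, ih, add_mul, mul_assoc, h, mul_add, mul_one, key,
      Nat.succ_sub_one, succ_nsmul, add_assoc, add_comm (u ^ m), ← mul_assoc, ← pow_succ]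

lemma sum_shift {M : Type*} [AddCommMonoid M] (s : ℕ) (F : ℕ → M) (hF : F (s + 1) = 0) :
    ∑ e ∈ Finset.range (s + 1), F e
      = (∑ e ∈ Finset.range (s + 1), F (e + 1)) + F 0 := by
  have h1 := Finset.sum_range_succ F (s + 1)
  have h2 := Finset.sum_range_succ' F (s + 1)
  rw [hF, add_zero] at h1
  rw [← h1, h2]

/-- One-variable normal ordering formula. -/
lemma weyl_single_pow (u v : R) (h : v * u = u * v + 1) (s b : ℕ) :
    v ^ s * u ^ b = ∑ e ∈ Finset.range (s + 1),
      (s.choose e * b.choose e * e.factorial) • (u ^ (b - e) * v ^ (s - e)) := by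
  induction s with
  | zero => simp
  | succ s ih =>
    rw [pow_succ', mul_assoc, ih, Finset.mul_sum]
    have expand : ∀ e ∈ Finset.range (s + 1),
        v * ((s.choose e * b.choose e * e.factorial) • (u ^ (b - e) * v ^ (s - e)))
          = (s.choose e * b.choose e * e.factorial) • (u ^ (b - e) * v ^ (s + 1 - e))
            + (s.choose e * b.choose (e + 1) * (e + 1).factorial) •
                (u ^ (b - (e + 1)) * v ^ (s + 1 - (e + 1))) := by
      intro e he
      have he' : e ≤ s := Nat.lt_succ_iff.mp (Finset.mem_range.mp he)
      have hcoef : s.choose e * b.choose e * e.factorial * (b - e)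
          = s.choose e * b.choose (e + 1) * (e + 1).factorial := by
        have hbc : b.choose (e + 1) * (e + 1) = b.choose e * (b - e) :=
          Nat.choose_succ_right_eq b e
        calc s.choose e * b.choose e * e.factorial * (b - e)
            = s.choose e * (b.choose e * (b - e)) * e.factorial := by ring
          _ = s.choose e * (b.choose (e + 1) * (e + 1)) * e.factorial := by rw [hbc]
          _ = s.choose e * b.choose (e + 1) * (e + 1).factorial := by
              rw [Nat.factorial_succ]; ring
      have h1 : b - e - 1 = b - (e + 1) := by omega
      have h2 : s + 1 - (e + 1) = s - e := by omega
      have h3 : s + 1 - e = s - e + 1 := by omega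
      rw [mul_smul_comm, ← mul_assoc, weyl_single u v h (b - e), add_mul,
        smul_mul_assoc, smul_add, smul_smul, hcoef, h1, h2, h3,
        mul_assoc (u ^ (b - e)) v, ← pow_succ']
    rw [Finset.sum_congr rfl expand, Finset.sum_add_distrib]
    have hzero : ((s.choose (s + 1) * b.choose (s + 1) * (s + 1).factorial) •
        (u ^ (b - (s + 1)) * v ^ (s + 1 - (s + 1))) : R) = 0 := by
      simp [Nat.choose_succ_self]
    rw [sum_shift s (fun e => (s.choose e * b.choose e * e.factorial) •
        (u ^ (b - e) * v ^ (s + 1 - e))) hzero]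
    rw [Finset.sum_range_succ' (fun e => ((s + 1).choose e * b.choose e * e.factorial) •
        (u ^ (b - e) * v ^ (s + 1 - e))) (s + 1)]
    simp only [Nat.choose_succ_succ, Nat.choose_zero_right, Nat.succ_eq_add_one]
    have hsum :
        (∑ e ∈ Finset.range (s + 1),
            (s.choose (e + 1) * b.choose (e + 1) * (e + 1).factorial) •
              (u ^ (b - (e + 1)) * v ^ (s + 1 - (e + 1)))) +
          ∑ e ∈ Finset.range (s + 1),
            (s.choose e * b.choose (e + 1) * (e + 1).factorial) •
              (u ^ (b - (e + 1)) * v ^ (s + 1 - (e + 1)))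
        = ∑ e ∈ Finset.range (s + 1),
            ((s.choose e + s.choose (e + 1)) * b.choose (e + 1) * (e + 1).factorial) •
              (u ^ (b - (e + 1)) * v ^ (s + 1 - (e + 1))) := by
      rw [← Finset.sum_add_distrib]
      refine Finset.sum_congr rfl fun e _ => ?_
      rw [← add_smul]
      congr 1
      ring
    rw [add_right_comm, hsum]

lemma sum_Icc_cons {M : Type*} [AddCommMonoid M] {n : ℕ} (σ : Fin (n + 1) → ℕ)
    (F : (Fin (n + 1) → ℕ) → M) :
    ∑ ε ∈ Finset.Icc (0 : Fin (n + 1) → ℕ) σ, F ε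
      = ∑ e ∈ Finset.range (σ 0 + 1), ∑ ε' ∈ Finset.Icc (0 : Fin n → ℕ) (σ ∘ Fin.succ),
          F (Fin.cons e ε') := by
  rw [← Finset.sum_product']
  apply Finset.sum_nbij' (i := fun ε => (ε 0, ε ∘ Fin.succ))
    (j := fun p => Fin.cons p.1 p.2)
  · intro ε hε
    simp only [Finset.mem_Icc, Pi.le_def] at hε
    simp only [Finset.mem_product, Finset.mem_range, Nat.lt_succ_iff, Finset.mem_Icc,
      Pi.le_def]
    exact ⟨(hε.2 0), fun i => Nat.zero_le _, fun i => hε.2 i.succ⟩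
  · intro p hp
    simp only [Finset.mem_product, Finset.mem_range, Nat.lt_succ_iff, Finset.mem_Icc,
      Pi.le_def] at hp
    simp only [Finset.mem_Icc, Pi.le_def]
    refine ⟨fun i => Nat.zero_le _, fun i => ?_⟩
    induction i using Fin.cases with
    | zero => simpa using hp.1
    | succ j => simpa using hp.2.2 j
  · intro ε _
    exact Fin.cons_self_tail ε
  · intro p _
    refine Prod.ext (by simp) ?_
    funext i
    simp [Fin.cons_succ]
  · intro ε _
    exact congrArg F (Fin.cons_self_tail ε).symm

/-- Multivariable normal ordering: `y^σ x^β = ∑ C(σ,ε)C(β,ε)ε! x^{β-ε} y^{σ-ε}`. -/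
lemma key {n : ℕ} (x y : Fin n → R)
    (hxx : ∀ i j, x i * x j = x j * x i) (hyy : ∀ i j, y i * y j = y j * y i)
    (hyx : ∀ i j, i ≠ j → y i * x j = x j * y i)
    (hyx' : ∀ i, y i * x i = x i * y i + 1) (σ β : Fin n → ℕ) :
    orderedPow y σ * orderedPow x β
      = ∑ ε ∈ Finset.Icc (0 : Fin n → ℕ) σ,
          (∏ i, (σ i).choose (ε i) * (β i).choose (ε i) * (ε i).factorial) •
            (orderedPow x (β - ε) * orderedPow y (σ - ε)) := by
  induction n with
  | zero =>
    have hσ : σ = 0 := Subsingleton.elim σ 0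
    subst hσ
    simp [orderedPow_zero_fun, Finset.Icc_self]
  | succ n ih =>
    rw [orderedPow_succ y σ, orderedPow_succ x β]
    set Y' := orderedPow (y ∘ Fin.succ) (σ ∘ Fin.succ) with hY'
    set X' := orderedPow (x ∘ Fin.succ) (β ∘ Fin.succ) with hX'
    have hc1 : Commute (x 0 ^ β 0) (orderedPow (y ∘ Fin.succ) (σ ∘ Fin.succ)) :=
      commute_orderedPow (fun i => Commute.pow_left (Commute.symm (hyx (Fin.succ i) 0 (Fin.succ_ne_zero i) : Commute (y (Fin.succ i)) (x 0))) _) _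
    have rearr : y 0 ^ σ 0 * Y' * (x 0 ^ β 0 * X')
        = (y 0 ^ σ 0 * x 0 ^ β 0) * (Y' * X') := by
      have h0 : Y' * (x 0 ^ β 0 * X') = x 0 ^ β 0 * (Y' * X') := by
        rw [← mul_assoc, ← hc1.eq, mul_assoc]
      rw [mul_assoc, h0, ← mul_assoc, ← mul_assoc]
    rw [rearr, weyl_single_pow (x 0) (y 0) (hyx' 0) (σ 0) (β 0),
      ih (x ∘ Fin.succ) (y ∘ Fin.succ) (fun i j => hxx _ _) (fun i j => hyy _ _)
        (fun i j hij => hyx _ _ (fun hh => hij (Fin.succ_injective n hh)))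
        (fun i => hyx' _) (σ ∘ Fin.succ) (β ∘ Fin.succ),
      Finset.sum_mul_sum, sum_Icc_cons]
    refine Finset.sum_congr rfl fun e he => Finset.sum_congr rfl fun ε' hε' => ?_
    have he' : e ≤ σ 0 := Nat.lt_succ_iff.mp (Finset.mem_range.mp he)
    have hε'' : ε' ≤ σ ∘ Fin.succ := by
      simpa [Finset.mem_Icc] using hε'
    -- coefficients
    rw [smul_mul_assoc, mul_smul_comm, smul_smul]
    have hcoef : (σ 0).choose e * (β 0).choose e * e.factorial *
          ∏ i, ((σ ∘ Fin.succ) i).choose (ε' i) * ((β ∘ Fin.succ) i).choose (ε' i) *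
            (ε' i).factorial
        = ∏ i, (σ i).choose ((Fin.cons e ε' : Fin (n + 1) → ℕ) i) * (β i).choose ((Fin.cons e ε' : Fin (n + 1) → ℕ) i) *
            ((Fin.cons e ε' : Fin (n + 1) → ℕ) i).factorial := by
      rw [Fin.prod_univ_succ]
      simp [Fin.cons_zero, Fin.cons_succ, Function.comp]
    rw [hcoef]
    congr 1
    -- monomials
    have hsub0 : ((β - Fin.cons e ε') : Fin (n + 1) → ℕ) 0 = β 0 - e := by
      simp [Fin.cons_zero]
    have hsubs : ((β - Fin.cons e ε') : Fin (n + 1) → ℕ) ∘ Fin.succ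
        = β ∘ Fin.succ - ε' := by
      funext i; simp [Fin.cons_succ]
    have hsub0' : ((σ - Fin.cons e ε') : Fin (n + 1) → ℕ) 0 = σ 0 - e := by
      simp [Fin.cons_zero]
    have hsubs' : ((σ - Fin.cons e ε') : Fin (n + 1) → ℕ) ∘ Fin.succ
        = σ ∘ Fin.succ - ε' := by
      funext i; simp [Fin.cons_succ]
    conv_rhs => rw [orderedPow_succ, orderedPow_succ]
    rw [hsub0, hsubs, hsub0', hsubs']
    have hc2 : Commute (y 0 ^ (σ 0 - e)) (orderedPow (x ∘ Fin.succ) (β ∘ Fin.succ - ε')) :=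
      commute_orderedPow (fun i => Commute.pow_left (hyx 0 (Fin.succ i) (Fin.succ_ne_zero i).symm : Commute (y 0) (x (Fin.succ i))) _) _
    have h0 : y 0 ^ (σ 0 - e) *
          (orderedPow (x ∘ Fin.succ) (β ∘ Fin.succ - ε') *
            orderedPow (y ∘ Fin.succ) (σ ∘ Fin.succ - ε'))
        = orderedPow (x ∘ Fin.succ) (β ∘ Fin.succ - ε') *
            (y 0 ^ (σ 0 - e) * orderedPow (y ∘ Fin.succ) (σ ∘ Fin.succ - ε')) := by
      rw [← mul_assoc, hc2.eq, mul_assoc]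
    rw [mul_assoc, h0, ← mul_assoc, ← mul_assoc]

lemma coeff_vanish {n : ℕ} {σ β ε : Fin n → ℕ} (h : ¬ε ≤ β ⊓ σ) :
    (∏ i, (σ i).choose (ε i) * (β i).choose (ε i) * (ε i).factorial) = 0 := by
  rw [Pi.le_def] at h
  push_neg at h
  obtain ⟨i, hi⟩ := h
  rw [Pi.inf_apply, inf_lt_iff] at hi
  apply Finset.prod_eq_zero (Finset.mem_univ i)
  rcases hi with hi | hi
  · simp [Nat.choose_eq_zero_of_lt hi]
  · simp [Nat.choose_eq_zero_of_lt hi]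

lemma prod_formula {n : ℕ} (x y : Fin n → R)
    (hxx : ∀ i j, x i * x j = x j * x i) (hyy : ∀ i j, y i * y j = y j * y i)
    (hyx : ∀ i j, i ≠ j → y i * x j = x j * y i)
    (hyx' : ∀ i, y i * x i = x i * y i + 1) (α σ β τ m : Fin n → ℕ)
    (hm : β ⊓ σ ≤ m) :
    orderedPow x α * orderedPow y σ * (orderedPow x β * orderedPow y τ)
      = ∑ ε ∈ Finset.Icc (0 : Fin n → ℕ) m,
          (∏ i, (σ i).choose (ε i) * (β i).choose (ε i) * (ε i).factorial) •
            (orderedPow x (α + β - ε) * orderedPow y (σ + τ - ε)) := by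
  have hassoc : orderedPow x α * orderedPow y σ * (orderedPow x β * orderedPow y τ)
      = orderedPow x α * (orderedPow y σ * orderedPow x β) * orderedPow y τ := by
    noncomm_ring
  rw [hassoc, key x y hxx hyy hyx hyx' σ β, Finset.mul_sum, Finset.sum_mul]
  have hsub1 : Finset.Icc (0 : Fin n → ℕ) (β ⊓ σ) ⊆ Finset.Icc 0 σ :=
    Finset.Icc_subset_Icc le_rfl inf_le_right
  have hsub2 : Finset.Icc (0 : Fin n → ℕ) (β ⊓ σ) ⊆ Finset.Icc 0 m :=
    Finset.Icc_subset_Icc le_rfl hm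
  calc
    ∑ ε ∈ Finset.Icc (0 : Fin n → ℕ) σ,
        orderedPow x α *
          ((∏ i, (σ i).choose (ε i) * (β i).choose (ε i) * (ε i).factorial) •
            (orderedPow x (β - ε) * orderedPow y (σ - ε))) * orderedPow y τ
      = ∑ ε ∈ Finset.Icc (0 : Fin n → ℕ) (β ⊓ σ),
          orderedPow x α *
            ((∏ i, (σ i).choose (ε i) * (β i).choose (ε i) * (ε i).factorial) •
              (orderedPow x (β - ε) * orderedPow y (σ - ε))) * orderedPow y τ := by
        refine (Finset.sum_subset hsub1 ?_).symm
        intro ε _ hεn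
        have h0 : ¬ε ≤ β ⊓ σ := by
          intro hc
          exact hεn (Finset.mem_Icc.mpr ⟨fun i => Nat.zero_le _, hc⟩)
        rw [coeff_vanish h0, zero_smul, mul_zero, zero_mul]
    _ = ∑ ε ∈ Finset.Icc (0 : Fin n → ℕ) (β ⊓ σ),
          (∏ i, (σ i).choose (ε i) * (β i).choose (ε i) * (ε i).factorial) •
            (orderedPow x (α + β - ε) * orderedPow y (σ + τ - ε)) := by
        refine Finset.sum_congr rfl fun ε hε => ?_
        have hεβσ : ε ≤ β ⊓ σ := (Finset.mem_Icc.mp hε).2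
        have hεβ : ε ≤ β := hεβσ.trans inf_le_left
        have hεσ : ε ≤ σ := hεβσ.trans inf_le_right
        rw [mul_smul_comm, smul_mul_assoc]
        congr 1
        have e1 : α + β - ε = α + (β - ε) := funext fun i => by
          have h2 : ε i ≤ β i := hεβ i
          show α i + β i - ε i = α i + (β i - ε i)
          omega
        have e2 : σ + τ - ε = (σ - ε) + τ := funext fun i => by
          have h2 : ε i ≤ σ i := hεσ i
          show σ i + τ i - ε i = (σ i - ε i) + τ i
          omega
        rw [e1, e2, orderedPow_add x (fun i j => (hxx i j : Commute (x i) (x j))),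
          orderedPow_add y (fun i j => (hyy i j : Commute (y i) (y j)))]
        noncomm_ring
    _ = ∑ ε ∈ Finset.Icc (0 : Fin n → ℕ) m,
          (∏ i, (σ i).choose (ε i) * (β i).choose (ε i) * (ε i).factorial) •
            (orderedPow x (α + β - ε) * orderedPow y (σ + τ - ε)) := by
        refine Finset.sum_subset hsub2 ?_
        intro ε _ hεn
        have h0 : ¬ε ≤ β ⊓ σ := by
          intro hc
          exact hεn (Finset.mem_Icc.mpr ⟨fun i => Nat.zero_le _, hc⟩)
        rw [coeff_vanish h0, zero_smul]

end Statement10Aux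

theorem statement10 {R : Type} [Ring R] (n : ℕ) (x y : Fin n → R)
    (hxx : ∀ i j, x i * x j = x j * x i) (hyy : ∀ i j, y i * y j = y j * y i)
    (hyx : ∀ i j, i ≠ j → y i * x j = x j * y i)
    (hyx' : ∀ i, y i * x i = x i * y i + 1)
    (α σ β τ : Fin n → ℕ) :
    orderedPow x α * orderedPow y σ * (orderedPow x β * orderedPow y τ) -
        orderedPow x β * orderedPow y τ * (orderedPow x α * orderedPow y σ) =
      ∑ ε ∈ Finset.Icc (0 : Fin n → ℕ) ((β ⊓ σ) ⊔ (α ⊓ τ)),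
        ((((∏ i, (β i).choose (ε i) : ℕ) * (∏ i, (σ i).choose (ε i)) : ℤ) -
            ((∏ i, (α i).choose (ε i) : ℕ) * (∏ i, (τ i).choose (ε i)) : ℤ)) *
              ((∏ i, (ε i).factorial : ℕ) : ℤ)) •
          (orderedPow x (α + β - ε) * orderedPow y (σ + τ - ε)) := by
  rw [Statement10Aux.prod_formula x y hxx hyy hyx hyx' α σ β τ ((β ⊓ σ) ⊔ (α ⊓ τ)) le_sup_left,
    Statement10Aux.prod_formula x y hxx hyy hyx hyx' β τ α σ ((β ⊓ σ) ⊔ (α ⊓ τ)) le_sup_right,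
    ← Finset.sum_sub_distrib]
  refine Finset.sum_congr rfl fun ε hε => ?_
  rw [add_comm β α, add_comm τ σ]
  have hc1 : (∏ i, (σ i).choose (ε i) * (β i).choose (ε i) * (ε i).factorial)
      = (∏ i, (σ i).choose (ε i)) * (∏ i, (β i).choose (ε i)) * (∏ i, (ε i).factorial) := by
    rw [Finset.prod_mul_distrib, Finset.prod_mul_distrib]
  have hc2 : (∏ i, (τ i).choose (ε i) * (α i).choose (ε i) * (ε i).factorial)
      = (∏ i, (τ i).choose (ε i)) * (∏ i, (α i).choose (ε i)) * (∏ i, (ε i).factorial) := by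
    rw [Finset.prod_mul_distrib, Finset.prod_mul_distrib]
  rw [hc1, hc2]
  have hz : ((((∏ i, (β i).choose (ε i) : ℕ) * (∏ i, (σ i).choose (ε i)) : ℤ) -
        ((∏ i, (α i).choose (ε i) : ℕ) * (∏ i, (τ i).choose (ε i)) : ℤ)) *
          ((∏ i, (ε i).factorial : ℕ) : ℤ))
      = (((∏ i, (σ i).choose (ε i)) * (∏ i, (β i).choose (ε i)) *
            (∏ i, (ε i).factorial) : ℕ) : ℤ)
        - (((∏ i, (τ i).choose (ε i)) * (∏ i, (α i).choose (ε i)) *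
            (∏ i, (ε i).factorial) : ℕ) : ℤ) := by
    push_cast
    ring
  rw [hz, sub_smul, natCast_zsmul, natCast_zsmul]
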